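/- Let Q, Q̃ ∈ ℝ^{d×k'} with Q̃ = VS where V ∈ ℝ^{d×r} has orthonormal columns, S ∈ ℝ^{r×(r-k')} has orthonormal columns, SᵀVᵀQ = 0, and Z ∈ ℝ^{d×(d-r)} is the orthonormal complement of V. Then for any matrix X with ZᵀX well-defined such that Xᵀ = Mᵀ Z Zᵀ for some M (i.e., the rows of Xᵀ lie in the column span of Z), we have ‖Xᵀ[Q,Q̃](Vᵀ[Q,Q̃])^{-1}‖_F² = ‖XᵀQ(QᵀVVᵀQ)^{-1/2}‖_F², assuming Vᵀ[Q,Q̃] is invertible. -/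

import Mathlib

open Matrix

/-- Under-sampling identity: if `Q̃ = V S` lies in the column span of `V`
(with `S` column-orthonormal and orthogonal to `VᵀQ`), `Z` is the orthonormal
complement of `V`, `X = Z Zᵀ M` has its columns in the span of `Z`, `B` is the
inverse of `Vᵀ[Q, Q̃]`, and `C` is the PSD square root of `(QᵀVVᵀQ)⁻¹`, then
`‖Xᵀ[Q,Q̃](Vᵀ[Q,Q̃])⁻¹‖_F² = ‖XᵀQ(QᵀVVᵀQ)^{-1/2}‖_F²`. -/
theorem under_sampling_frobenius_identity {d r k' s : ℕ} (hk' : k' ≤ r)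
    (V : Matrix (Fin d) (Fin r) ℝ) (hV : Vᵀ * V = 1)
    (Z : Matrix (Fin d) (Fin (d - r)) ℝ) (hZ : Zᵀ * Z = 1) (hZV : Zᵀ * V = 0)
    (hcomp : V * Vᵀ + Z * Zᵀ = 1)
    (Q : Matrix (Fin d) (Fin k') ℝ)
    (S : Matrix (Fin r) (Fin (r - k')) ℝ) (hS : Sᵀ * S = 1)
    (hSQ : Sᵀ * (Vᵀ * Q) = 0)
    (M : Matrix (Fin d) (Fin s) ℝ)
    (B : Matrix (Fin k' ⊕ Fin (r - k')) (Fin r) ℝ)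
    (hB1 : Vᵀ * Matrix.fromCols Q (V * S) * B = 1)
    (hB2 : B * (Vᵀ * Matrix.fromCols Q (V * S)) = 1)
    (C : Matrix (Fin k') (Fin k') ℝ) (hCpsd : C.PosSemidef)
    (hC : C * C = (Qᵀ * (V * Vᵀ) * Q)⁻¹) :
    Matrix.trace (((Z * Zᵀ * M)ᵀ * Matrix.fromCols Q (V * S) * B)ᵀ *
        ((Z * Zᵀ * M)ᵀ * Matrix.fromCols Q (V * S) * B))
      = Matrix.trace (((Z * Zᵀ * M)ᵀ * Q * C)ᵀ * ((Z * Zᵀ * M)ᵀ * Q * C)) := by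
  set F : Matrix (Fin d) (Fin k' ⊕ Fin (r - k')) ℝ := Matrix.fromCols Q (V * S) with hF
  set X : Matrix (Fin d) (Fin s) ℝ := Z * Zᵀ * M with hXdef
  set A : Matrix (Fin r) (Fin k' ⊕ Fin (r - k')) ℝ := Vᵀ * F with hA
  set G : Matrix (Fin k') (Fin k') ℝ := Qᵀ * (V * Vᵀ) * Q with hG
  have hXt : Xᵀ = Mᵀ * Z * Zᵀ := by
    simp [hXdef, Matrix.transpose_mul, Matrix.mul_assoc]
  -- X is orthogonal to V
  have hXV : Xᵀ * V = 0 := by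
    rw [hXt, Matrix.mul_assoc, Matrix.mul_assoc, hZV, Matrix.mul_zero, Matrix.mul_zero]
  have hXVS : Xᵀ * (V * S) = 0 := by
    rw [← Matrix.mul_assoc, hXV, Matrix.zero_mul]
  have hXQ' : Xᵀ * F = Matrix.fromCols (Xᵀ * Q) 0 := by
    rw [hF, Matrix.mul_fromCols, hXVS]
  -- the Gram matrix AᵀA is block diagonal
  have hQVS : Qᵀ * V * S = 0 := by
    have := congrArg Matrix.transpose hSQ
    simpa [Matrix.transpose_mul, Matrix.mul_assoc] using this
  have hAcol : A = Matrix.fromCols (Vᵀ * Q) S := by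
    rw [hA, hF, Matrix.mul_fromCols, ← Matrix.mul_assoc, hV, Matrix.one_mul]
  have hAtA : Aᵀ * A = Matrix.fromBlocks G 0 0 1 := by
    rw [hAcol, Matrix.transpose_fromCols, Matrix.fromRows_mul_fromCols]
    refine Matrix.fromBlocks_inj.mpr ⟨?_, ?_, ?_, hS⟩
    · rw [Matrix.transpose_mul, Matrix.transpose_transpose, hG]
      simp only [Matrix.mul_assoc]
    · rw [Matrix.transpose_mul, Matrix.transpose_transpose, hQVS]
    · exact hSQ
  -- N = B Bᵀ is the inverse of AᵀA
  set N : Matrix (Fin k' ⊕ Fin (r - k')) (Fin k' ⊕ Fin (r - k')) ℝ := B * Bᵀ with hN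
  have hAB : A * B = 1 := hB1
  have hBA : B * A = 1 := hB2
  have hND : N * (Aᵀ * A) = 1 := by
    rw [hN, Matrix.mul_assoc, ← Matrix.mul_assoc Bᵀ, ← Matrix.transpose_mul, hAB,
      Matrix.transpose_one, Matrix.one_mul, hBA]
  have hDN : (Aᵀ * A) * N = 1 := by
    rw [hN, Matrix.mul_assoc, ← Matrix.mul_assoc A, hAB, Matrix.one_mul,
      ← Matrix.transpose_mul, hBA, Matrix.transpose_one]
  -- block structure of N
  set P : Matrix (Fin k') (Fin k') ℝ := N.toBlocks₁₁ with hP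
  have hNb : N = Matrix.fromBlocks P N.toBlocks₁₂ N.toBlocks₂₁ N.toBlocks₂₂ :=
    (Matrix.fromBlocks_toBlocks N).symm
  rw [hAtA] at hND hDN
  rw [← Matrix.fromBlocks_one] at hND hDN
  rw [hNb, Matrix.fromBlocks_multiply] at hND hDN
  simp only [Matrix.mul_zero, Matrix.zero_mul, Matrix.mul_one, Matrix.one_mul,
    add_zero, zero_add] at hND hDN
  obtain ⟨hPG, hN12, hN21G, hN22⟩ := Matrix.fromBlocks_inj.mp hND
  obtain ⟨hGP, hGN12, hN21, hN22'⟩ := Matrix.fromBlocks_inj.mp hDN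
  have hNblock : N = Matrix.fromBlocks P 0 0 1 := by
    rw [hNb, hN12, hN21, hN22]
  -- C * C = P
  have hCC : C * C = P := by
    rw [hC, Matrix.inv_eq_right_inv hGP]
  have hCt : Cᵀ = C := by
    have := hCpsd.isHermitian
    rwa [Matrix.IsHermitian, Matrix.conjTranspose_eq_transpose_of_trivial] at this
  -- the two key product computations
  have hL1 : Xᵀ * F * B * (Xᵀ * F * B)ᵀ = (Xᵀ * F) * N * (Xᵀ * F)ᵀ := by
    rw [hN]
    simp only [Matrix.transpose_mul, Matrix.mul_assoc]
  have key : (Xᵀ * F) * N * (Xᵀ * F)ᵀ = Xᵀ * Q * C * (Xᵀ * Q * C)ᵀ := by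
    rw [hXQ', hNblock, Matrix.transpose_fromCols, Matrix.fromCols_mul_fromBlocks,
      Matrix.fromCols_mul_fromRows, Matrix.transpose_mul (Xᵀ * Q) C, hCt]
    simp only [Matrix.mul_zero, Matrix.zero_mul, Matrix.mul_one, Matrix.one_mul,
      add_zero, zero_add, Matrix.transpose_zero, Matrix.mul_assoc]
    rw [← Matrix.mul_assoc C C, hCC]
  calc Matrix.trace ((Xᵀ * F * B)ᵀ * (Xᵀ * F * B))
      = Matrix.trace (Xᵀ * F * B * (Xᵀ * F * B)ᵀ) := Matrix.trace_mul_comm _ _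
    _ = Matrix.trace (Xᵀ * Q * C * (Xᵀ * Q * C)ᵀ) := by rw [hL1, key]
    _ = Matrix.trace ((Xᵀ * Q * C)ᵀ * (Xᵀ * Q * C)) := Matrix.trace_mul_comm _ _
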